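/- Let λ ≠ 1 be an eigenvalue of A_n. Then the vector v ∈ ℂⁿ with entries v_j = Y(j) = Σ_{k ≥ 0} d(j,k)(λ−1)^{−k} for 1 ≤ j ≤ n is nonzero and satisfies A_nᵀ v = λ v; moreover it spans the one-dimensional λ-eigenspace of A_nᵀ. -/

import Mathlib

/-- The Dirichlet matrix `D_n` attached to the coefficient sequence `a`. -/
def Dmat (n : ℕ) (a : ℕ → ℂ) : Matrix (Fin n) (Fin n) ℂ :=
  fun i j => if (i.val + 1) ∣ (j.val + 1) then a ((j.val + 1) / (i.val + 1)) else 0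

/-- The weight matrix `W_n`: `(i,1)` entry `w i` for `2 ≤ i ≤ n`, other entries `0`. -/
def Wmat (n : ℕ) (w : ℕ → ℂ) : Matrix (Fin n) (Fin n) ℂ :=
  fun i j => if j.val = 0 ∧ i.val ≠ 0 then w (i.val + 1) else 0

/-- `A_n = W_n + D_n`. -/
def Amat (n : ℕ) (a w : ℕ → ℂ) : Matrix (Fin n) (Fin n) ℂ :=
  Wmat n w + Dmat n a

/-- `dcoef a m k`: the sum of `∏ a ℓᵢ` over `k`-tuples of integers `ℓᵢ ≥ 2`
with product `m`. -/
noncomputable def dcoef (a : ℕ → ℂ) (m k : ℕ) : ℂ :=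
  ∑ t ∈ (Fintype.piFinset fun _ : Fin k => Finset.Icc 2 m).filter
      (fun t => ∏ i, t i = m), ∏ i, a (t i)

/-- `Y(j) = ∑_{k ≥ 0} d(j,k) (λ-1)^{-k}`; the sum has finitely many nonzero terms
since `d(j,k) = 0` for `k > log₂ j`. -/
noncomputable def Yfun (a : ℕ → ℂ) (lam : ℂ) (j : ℕ) : ℂ :=
  ∑' k : ℕ, dcoef a j k * (lam - 1) ^ (-(k : ℤ))

lemma dcoef_zero (a : ℕ → ℂ) (m : ℕ) : dcoef a m 0 = if m = 1 then 1 else 0 := by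
  unfold dcoef
  split <;> rename_i h <;>
    simp [h, Finset.filter_eq_self, Finset.filter_false_of_mem, eq_comm]

lemma dcoef_eq_zero_of_lt (a : ℕ → ℂ) (m k : ℕ) (h : m < 2 ^ k) : dcoef a m k = 0 := by
  unfold dcoef
  rw [Finset.sum_eq_zero]
  intro t ht
  exfalso
  simp only [Finset.mem_filter, Fintype.mem_piFinset, Finset.mem_Icc] at ht
  have h2 : (2:ℕ) ^ k ≤ ∏ i, t i := by
    calc (2:ℕ) ^ k = ∏ _i : Fin k, 2 := by simp
    _ ≤ ∏ i, t i := Finset.prod_le_prod (by simp) (fun i _ => (ht.1 i).1)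
  omega

lemma Yfun_eq_sum (a : ℕ → ℂ) (lam : ℂ) (m N : ℕ) (hm : 1 ≤ m) (hN : m ≤ N) :
    Yfun a lam m = ∑ k ∈ Finset.range N, dcoef a m k * (lam - 1) ^ (-(k : ℤ)) := by
  apply tsum_eq_sum
  intro k hk
  rw [Finset.mem_range, not_lt] at hk
  rw [dcoef_eq_zero_of_lt a m k (by calc m < N + 1 := by omega
        _ ≤ k + 1 := by omega
        _ ≤ 2 ^ k := Nat.succ_le_of_lt (Nat.lt_two_pow_self (n := k))), zero_mul]

lemma Yfun_one (a : ℕ → ℂ) (lam : ℂ) : Yfun a lam 1 = 1 := by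
  rw [Yfun_eq_sum a lam 1 1 le_rfl le_rfl]
  simp [dcoef_zero]

lemma dcoef_succ (a : ℕ → ℂ) (m k : ℕ) (hm : 1 ≤ m) :
    dcoef a m (k+1) = ∑ ℓ ∈ m.divisors.filter (fun ℓ => 2 ≤ ℓ), a ℓ * dcoef a (m/ℓ) k := by
  conv_rhs => rw [Finset.sum_congr rfl (fun ℓ _ => by rw [dcoef, Finset.mul_sum])]
  rw [Finset.sum_sigma']
  unfold dcoef
  refine Finset.sum_bij' (i := fun t _ => (⟨t 0, Fin.tail t⟩ : Σ _ : ℕ, Fin k → ℕ))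
    (j := fun p _ => Fin.cons p.1 p.2) ?_ ?_ ?_ ?_ ?_
  · -- hi
    intro t ht
    simp only [Finset.mem_filter, Fintype.mem_piFinset, Finset.mem_Icc] at ht
    obtain ⟨hmem, hprod⟩ := ht
    have h0 : t 0 ∣ m := hprod ▸ Finset.dvd_prod_of_mem t (Finset.mem_univ 0)
    have htail : ∏ i, Fin.tail t i = m / t 0 := by
      have h := Fin.prod_univ_succ t
      rw [hprod] at h
      have h0pos : 0 < t 0 := by have := (hmem 0).1; omega
      simp only [Fin.tail]
      rw [h, Nat.mul_div_cancel_left _ h0pos]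
    have hd : m / t 0 ∣ m := Nat.div_dvd_of_dvd h0
    have hpos : 0 < m / t 0 :=
      Nat.div_pos (Nat.le_of_dvd (by omega) h0) (by have := (hmem 0).1; omega)
    simp only [Finset.mem_sigma, Finset.mem_filter, Nat.mem_divisors, Fintype.mem_piFinset,
      Finset.mem_Icc]
    refine ⟨⟨⟨h0, by omega⟩, (hmem 0).1⟩, fun i => ⟨(hmem i.succ).1, ?_⟩, htail⟩
    · have : Fin.tail t i ∣ m / t 0 := htail ▸ Finset.dvd_prod_of_mem _ (Finset.mem_univ i)
      exact Nat.le_of_dvd hpos this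
  · -- hj
    intro p hp
    obtain ⟨ℓ, s⟩ := p
    simp only [Finset.mem_sigma, Finset.mem_filter, Nat.mem_divisors, Fintype.mem_piFinset,
      Finset.mem_Icc] at hp
    obtain ⟨⟨⟨hdvd, _⟩, h2⟩, hs, hprod⟩ := hp
    have hlm : ℓ ≤ m := Nat.le_of_dvd (by omega) hdvd
    simp only [Finset.mem_filter, Fintype.mem_piFinset, Finset.mem_Icc]
    constructor
    · intro i
      refine Fin.cases ?_ (fun i => ?_) i
      · simpa using ⟨h2, hlm⟩
      · simp only [Fin.cons_succ]
        exact ⟨(hs i).1, le_trans (hs i).2 (Nat.div_le_self m ℓ)⟩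
    · rw [Fin.prod_univ_succ]
      simp only [Fin.cons_zero, Fin.cons_succ]
      rw [hprod, Nat.mul_div_cancel' hdvd]
  · intro t ht; exact Fin.cons_self_tail t
  · intro p hp; obtain ⟨ℓ, s⟩ := p; simp [Fin.tail_cons]
  · intro t ht
    rw [Fin.prod_univ_succ]
    simp [Fin.tail]

lemma Yfun_rec (a : ℕ → ℂ) (lam : ℂ) (m : ℕ) (hm : 2 ≤ m) (hmu : lam - 1 ≠ 0) :
    ∑ ℓ ∈ m.divisors.filter (fun ℓ => 2 ≤ ℓ), a ℓ * Yfun a lam (m/ℓ) =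
      (lam - 1) * Yfun a lam m := by
  have hstep : ∀ ℓ ∈ m.divisors.filter (fun ℓ => 2 ≤ ℓ),
      a ℓ * Yfun a lam (m/ℓ)
        = ∑ k ∈ Finset.range m, a ℓ * (dcoef a (m/ℓ) k * (lam-1)^(-(k:ℤ))) := by
    intro ℓ hℓ
    simp only [Finset.mem_filter, Nat.mem_divisors] at hℓ
    rw [Yfun_eq_sum a lam (m/ℓ) m
      (Nat.div_pos (Nat.le_of_dvd (by omega) hℓ.1.1) (by omega)) (Nat.div_le_self m ℓ),
      Finset.mul_sum]
  rw [Finset.sum_congr rfl hstep, Finset.sum_comm,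
    Yfun_eq_sum a lam m (m+1) (by omega) (by omega),
    Finset.mul_sum, Finset.sum_range_succ', dcoef_zero]
  simp only [if_neg (by omega : ¬ m = 1), zero_mul, mul_zero, add_zero]
  refine Finset.sum_congr rfl (fun k _ => ?_)
  have hz : (lam-1) * (lam-1)^(-((k+1 : ℕ) : ℤ)) = (lam-1)^(-(k:ℤ)) := by
    rw [← zpow_one_add₀ hmu]; congr 1; push_cast; ring
  simp only [← mul_assoc]
  rw [← Finset.sum_mul, ← dcoef_succ a m k (by omega)]
  linear_combination -(dcoef a m (k+1)) * hz

lemma sum_properDivisors_eq (m : ℕ) (hm : 2 ≤ m) (f : ℕ → ℂ) :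
    ∑ d ∈ m.properDivisors, f d = ∑ d ∈ m.divisors, (if d < m then f d else 0) := by
  rw [← Finset.sum_filter]
  congr 1
  ext d
  simp only [Finset.mem_filter, Nat.mem_divisors, Nat.mem_properDivisors]
  constructor
  · rintro ⟨h1, h2⟩; exact ⟨⟨h1, by omega⟩, h2⟩
  · rintro ⟨⟨h1, _⟩, h2⟩; exact ⟨h1, h2⟩

lemma proper_rec (a : ℕ → ℂ) (lam : ℂ) (m : ℕ) (hm : 2 ≤ m) (hmu : lam - 1 ≠ 0) :
    ∑ d ∈ m.properDivisors, a (m / d) * Yfun a lam d = (lam - 1) * Yfun a lam m := by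
  have key : ∀ ℓ ∈ m.divisors,
      (if m / ℓ < m then a (m / (m / ℓ)) * Yfun a lam (m / ℓ) else 0)
        = (if 2 ≤ ℓ then a ℓ * Yfun a lam (m / ℓ) else 0) := by
    intro ℓ hℓ
    simp only [Nat.mem_divisors] at hℓ
    obtain ⟨hdvd, hne⟩ := hℓ
    have hl1 : 1 ≤ ℓ := Nat.one_le_iff_ne_zero.mpr (by rintro rfl; simp at hdvd; omega)
    rw [Nat.div_div_self hdvd hne]
    have : m / ℓ < m ↔ 2 ≤ ℓ := by
      constructor
      · intro h; by_contra h2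
        have : ℓ = 1 := by omega
        simp [this] at h
      · intro h; exact Nat.div_lt_self (by omega) (by omega)
    by_cases h2 : 2 ≤ ℓ
    · rw [if_pos (this.mpr h2), if_pos h2]
    · rw [if_neg (fun hc => h2 (this.mp hc)), if_neg h2]
  calc ∑ d ∈ m.properDivisors, a (m / d) * Yfun a lam d
      = ∑ d ∈ m.divisors, (if d < m then a (m / d) * Yfun a lam d else 0) :=
        sum_properDivisors_eq m hm _
    _ = ∑ ℓ ∈ m.divisors, (if 2 ≤ ℓ then a ℓ * Yfun a lam (m / ℓ) else 0) := by
        rw [← Nat.sum_div_divisors m (fun d => if d < m then a (m / d) * Yfun a lam d else 0)]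
        exact Finset.sum_congr rfl key
    _ = (lam - 1) * Yfun a lam m := by
        rw [← Yfun_rec a lam m hm hmu, Finset.sum_filter]

lemma fin_divisor_sum (n m : ℕ) (hm : 1 ≤ m) (hmn : m ≤ n) (f : ℕ → ℂ) :
    ∑ j : Fin n, (if (j.val + 1) ∣ m then f (j.val + 1) else 0) = ∑ d ∈ m.divisors, f d := by
  rw [Fin.sum_univ_eq_sum_range (fun j => if (j + 1) ∣ m then f (j + 1) else 0) n]
  have h1 : ∑ d ∈ Finset.range (n+1), (if d ∣ m ∧ d ≠ 0 then f d else 0)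
      = ∑ j ∈ Finset.range n, (if (j + 1) ∣ m then f (j + 1) else 0) := by
    rw [Finset.sum_range_succ']
    simp
  rw [← h1, ← Finset.sum_filter]
  apply Finset.sum_congr _ (fun _ _ => rfl)
  ext d
  simp only [Finset.mem_filter, Finset.mem_range, Nat.mem_divisors, Nat.lt_succ_iff]
  constructor
  · rintro ⟨_, h2, h3⟩; exact ⟨h2, by omega⟩
  · rintro ⟨h1, h2⟩
    have := Nat.le_of_dvd (by omega) h1
    refine ⟨by omega, h1, by rintro rfl; simp at h1; omega⟩

lemma row_ne_zero (n : ℕ) (a w : ℕ → ℂ) (ha : a 1 = 1) (u : Fin n → ℂ) (i : Fin n)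
    (hi : i.val ≠ 0) :
    (Amat n a w).transpose.mulVec u i
      = u i + ∑ d ∈ (i.val + 1).properDivisors,
          a ((i.val + 1) / d) * (if h : d - 1 < n then u ⟨d - 1, h⟩ else 0) := by
  set m := i.val + 1 with hm
  have hstep : (Amat n a w).transpose.mulVec u i
      = ∑ j : Fin n, (if (j.val + 1) ∣ m then
          a (m / (j.val + 1)) * (if h : (j.val + 1) - 1 < n then u ⟨(j.val+1) - 1, h⟩ else 0)
        else 0) := by
    rw [Matrix.mulVec]
    rw [dotProduct]
    apply Finset.sum_congr rfl
    intro j _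
    simp only [Matrix.transpose_apply, Amat, Wmat, Dmat, Matrix.add_apply]
    rw [if_neg (by simp [hi] : ¬ (i.val = 0 ∧ j.val ≠ 0)), zero_add]
    by_cases hd : (j.val + 1) ∣ m
    · rw [if_pos hd, if_pos hd, dif_pos (by omega : j.val + 1 - 1 < n)]
      congr 1
    · rw [if_neg hd, if_neg hd, zero_mul]
  rw [hstep, fin_divisor_sum n m (by omega) (by omega)
    (fun d => a (m / d) * (if h : d - 1 < n then u ⟨d - 1, h⟩ else 0))]
  rw [← Nat.insert_self_properDivisors (show m ≠ 0 by omega),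
    Finset.sum_insert (by simp [Nat.mem_properDivisors])]
  rw [Nat.div_self (by omega : 0 < m), ha, one_mul,
    dif_pos (by omega : m - 1 < n)]
  have : (⟨m - 1, by omega⟩ : Fin n) = i := Fin.ext (by show m - 1 = i.val; omega)
  rw [this, add_comm]

lemma row_zero (n : ℕ) (a w : ℕ → ℂ) (ha : a 1 = 1) (u : Fin n → ℂ) (i : Fin n)
    (hi : i.val = 0) :
    (Amat n a w).transpose.mulVec u i
      = u i + ∑ j ∈ Finset.univ.erase i, w (j.val + 1) * u j := by
  rw [Matrix.mulVec, dotProduct]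
  rw [← Finset.add_sum_erase _ _ (Finset.mem_univ i)]
  congr 1
  · simp [Amat, Wmat, Dmat, Matrix.transpose_apply, ha]
  · apply Finset.sum_congr rfl
    intro j hj
    have hj0 : j.val ≠ 0 := by
      intro h
      exact (Finset.mem_erase.mp hj).1 (Fin.ext (h.trans hi.symm))
    have h1 : ¬ (j.val + 1 ∣ i.val + 1) := by
      rw [hi]
      intro hdvd
      have := Nat.le_of_dvd (by omega) hdvd
      omega
    simp [Amat, Wmat, Dmat, Matrix.transpose_apply, Matrix.add_apply, hj0, h1, hi]

lemma exists_eigvec (n : ℕ) (A : Matrix (Fin n) (Fin n) ℂ) (lam : ℂ)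
    (h : lam ∈ spectrum ℂ A) :
    ∃ x : Fin n → ℂ, x ≠ 0 ∧ A.transpose.mulVec x = lam • x := by
  rw [spectrum.mem_iff] at h
  have hdet : (lam • (1 : Matrix (Fin n) (Fin n) ℂ) - A).det = 0 := by
    by_contra hd
    exact h (by
      rw [Algebra.algebraMap_eq_smul_one]
      exact (Matrix.isUnit_iff_isUnit_det _).mpr (isUnit_iff_ne_zero.mpr hd))
  have hdetT : (lam • (1 : Matrix (Fin n) (Fin n) ℂ) - A.transpose).det = 0 := by
    rw [show lam • (1 : Matrix (Fin n) (Fin n) ℂ) - A.transpose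
        = (lam • (1 : Matrix (Fin n) (Fin n) ℂ) - A).transpose by
      rw [Matrix.transpose_sub, Matrix.transpose_smul, Matrix.transpose_one]]
    rw [Matrix.det_transpose]
    exact hdet
  obtain ⟨x, hx0, hx⟩ := Matrix.exists_mulVec_eq_zero_iff.mpr hdetT
  refine ⟨x, hx0, ?_⟩
  rw [Matrix.sub_mulVec, Matrix.smul_mulVec, Matrix.one_mulVec, sub_eq_zero] at hx
  exact hx.symm

/-- If `λ ≠ 1` is an eigenvalue of `A_n`, then the vector `v` with `v_j = Y(j)` for
`1 ≤ j ≤ n` is nonzero, satisfies `A_nᵀ v = λ v`, and spans the one-dimensional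
`λ`-eigenspace of `A_nᵀ`. -/
theorem eigenvector_Amat_transpose (n : ℕ) (hn : 2 ≤ n) (a w : ℕ → ℂ) (ha : a 1 = 1)
    (hw : w 1 = 1) (lam : ℂ) (hlam : lam ≠ 1) (heig : lam ∈ spectrum ℂ (Amat n a w)) :
    (fun j : Fin n => Yfun a lam (j.val + 1)) ≠ 0 ∧
    (Amat n a w).transpose.mulVec (fun j : Fin n => Yfun a lam (j.val + 1)) =
      lam • (fun j : Fin n => Yfun a lam (j.val + 1)) ∧
    ∀ x : Fin n → ℂ, (Amat n a w).transpose.mulVec x = lam • x →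
      ∃ c : ℂ, x = c • (fun j : Fin n => Yfun a lam (j.val + 1)) := by
  have hmu : lam - 1 ≠ 0 := sub_ne_zero.mpr hlam
  set v : Fin n → ℂ := fun j : Fin n => Yfun a lam (j.val + 1) with hv
  have h0n : 0 < n := by omega
  set i0 : Fin n := ⟨0, h0n⟩ with hi0
  have hv0 : v i0 = 1 := Yfun_one a lam
  -- rows i ≠ 0 of the eigen equation for v
  have hrowv : ∀ i : Fin n, i.val ≠ 0 →
      (Amat n a w).transpose.mulVec v i = lam * v i := by
    intro i hi
    rw [row_ne_zero n a w ha v i hi]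
    have hsum : ∑ d ∈ (i.val+1).properDivisors,
        a ((i.val+1)/d) * (if h : d - 1 < n then v ⟨d-1,h⟩ else 0)
          = ∑ d ∈ (i.val+1).properDivisors, a ((i.val+1)/d) * Yfun a lam d := by
      apply Finset.sum_congr rfl
      intro d hd
      rw [Nat.mem_properDivisors] at hd
      have hd1 : 1 ≤ d := Nat.pos_of_dvd_of_pos hd.1 (by omega)
      have hdn : d - 1 < n := by have := hd.2; omega
      rw [dif_pos hdn]
      have : v ⟨d-1, hdn⟩ = Yfun a lam d := by
        simp only [hv]
        congr 1
        omega
      rw [this]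
    rw [hsum, proper_rec a lam (i.val+1) (by omega) hmu]
    have : v i = Yfun a lam (i.val + 1) := rfl
    rw [this]
    ring
  -- uniqueness induction
  have hind : ∀ x : Fin n → ℂ, (Amat n a w).transpose.mulVec x = lam • x →
      ∀ N : ℕ, ∀ i : Fin n, i.val < N → x i = x i0 * v i := by
    intro x hx N
    induction N with
    | zero => intro i hi; omega
    | succ N ih =>
      intro i hi
      by_cases hlt : i.val < N
      · exact ih i hlt
      have hiN : i.val = N := by omega
      by_cases h0 : i.val = 0
      · have : i = i0 := Fin.ext h0
        rw [this, hv0, mul_one]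
      · have hxi := congrFun hx i
        rw [Pi.smul_apply, smul_eq_mul] at hxi
        rw [row_ne_zero n a w ha x i h0] at hxi
        have hsum : ∑ d ∈ (i.val+1).properDivisors,
            a ((i.val+1)/d) * (if h : d - 1 < n then x ⟨d-1,h⟩ else 0)
            = x i0 * ((lam - 1) * Yfun a lam (i.val+1)) := by
          rw [← proper_rec a lam (i.val+1) (by omega) hmu, Finset.mul_sum]
          apply Finset.sum_congr rfl
          intro d hd
          rw [Nat.mem_properDivisors] at hd
          have hd1 : 1 ≤ d := Nat.pos_of_dvd_of_pos hd.1 (by omega)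
          have hdn : d - 1 < n := by have := hd.2; omega
          rw [dif_pos hdn, ih ⟨d-1, hdn⟩ (by
            show d - 1 < N
            have := hd.2
            omega)]
          have hvd : v ⟨d-1, hdn⟩ = Yfun a lam d := by
            simp only [hv]
            congr 1
            omega
          rw [hvd]
          ring
        rw [hsum] at hxi
        have hcan : (lam - 1) * x i = (lam - 1) * (x i0 * v i) := by
          have hvi : v i = Yfun a lam (i.val + 1) := rfl
          rw [hvi]
          linear_combination -hxi
        exact mul_left_cancel₀ hmu hcan
  -- an eigenvector of Aᵀ from the spectrum hypothesis
  obtain ⟨x, hx0, hx⟩ := exists_eigvec n (Amat n a w) lam heig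
  have hxall : ∀ i, x i = x i0 * v i := fun i => hind x hx n i i.isLt
  have hxi0 : x i0 ≠ 0 := by
    intro h
    apply hx0
    funext i
    rw [hxall i, h, zero_mul]
    rfl
  -- row 0 of the eigen equation of x gives the weighted sum identity
  have hx0eq := congrFun hx i0
  rw [Pi.smul_apply, smul_eq_mul, row_zero n a w ha x i0 rfl] at hx0eq
  have hSv : ∑ j ∈ Finset.univ.erase i0, w (j.val + 1) * v j = lam - 1 := by
    have hS : ∑ j ∈ Finset.univ.erase i0, w (j.val + 1) * x j
        = x i0 * ∑ j ∈ Finset.univ.erase i0, w (j.val + 1) * v j := by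
      rw [Finset.mul_sum]
      apply Finset.sum_congr rfl
      intro j _
      rw [hxall j]
      ring
    rw [hS] at hx0eq
    apply mul_left_cancel₀ hxi0
    linear_combination hx0eq
  have heq : (Amat n a w).transpose.mulVec v = lam • v := by
    funext i
    rw [Pi.smul_apply, smul_eq_mul]
    by_cases hi : i.val = 0
    · have hii : i = i0 := Fin.ext hi
      rw [hii, row_zero n a w ha v i0 rfl, hSv, hv0]
      ring
    · exact hrowv i hi
  refine ⟨?_, heq, ?_⟩
  · intro h
    have h1 := congrFun h i0
    rw [hv0] at h1
    exact one_ne_zero (h1.trans rfl)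
  · intro y hy
    exact ⟨y i0, funext fun i => by
      rw [Pi.smul_apply, smul_eq_mul]
      exact hind y hy n i i.isLt⟩
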